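/- In the power minimization LP above (minimize Σ_n λ_r(x_jam,n + x_radar,n) subject to Σ_n λ_r(x_jam,n g_jam + x_radar,n g_radar,n) = C_1, x_radar,n ≥ C_{2,n}^2, x ≥ 0, with g_radar,n < g_jam for all n), the equal-allocation solution x_radar,n = C_{2,n}^2 and x_jam,n = C_1/(N λ_r g_jam) − (1/(N g_jam)) Σ_m C_{2,m}^2 g_radar,m (assumed nonnegative) is feasible and optimal. -/

import Mathlib

/-- Eq. (28): the equal-allocation solution `x_radar,n = C_{2,n}²`,
`x_jam,n = C₁/(N λ_r g_jam) − (1/(N g_jam)) Σ C_{2,m}² g_radar,m`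
is feasible and optimal for the power minimization LP. -/
theorem power_minimization_closed_form (N : ℕ) (hN : 1 ≤ N)
    (lamr gjam C1 : ℝ) (gr C2 : Fin N → ℝ)
    (hlam : 0 < lamr) (hgr : ∀ n, 0 ≤ gr n) (hgjam : ∀ n, gr n < gjam)
    (hC2 : ∀ n, 0 < C2 n)
    (hfeas : lamr * ∑ n, (C2 n) ^ 2 * gr n ≤ C1)
    (xjval : ℝ)
    (hxjval : xjval = C1 / (N * lamr * gjam) -
      (1 / (N * gjam)) * ∑ m, (C2 m) ^ 2 * gr m)
    (hnonneg : 0 ≤ xjval) :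
    ((∀ n : Fin N, 0 ≤ xjval) ∧ (∀ n : Fin N, (C2 n) ^ 2 ≤ (C2 n) ^ 2) ∧
      ∑ _n : Fin N, lamr * (xjval * gjam + (C2 _n) ^ 2 * gr _n) = C1) ∧
    (∀ yj yr : Fin N → ℝ, (∀ n, 0 ≤ yj n) → (∀ n, (C2 n) ^ 2 ≤ yr n) →
      (∑ n, lamr * (yj n * gjam + yr n * gr n) = C1) →
      ∑ _n : Fin N, lamr * (xjval + (C2 _n) ^ 2) ≤ ∑ n, lamr * (yj n + yr n)) := by
  have hNpos : (0:ℝ) < N := by exact_mod_cast hN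
  have n0 : Fin N := ⟨0, hN⟩
  have hgj : 0 < gjam := lt_of_le_of_lt (hgr n0) (hgjam n0)
  -- polynomial form of the definition of xjval
  have hx : xjval * ((N:ℝ) * lamr * gjam) = C1 - lamr * ∑ m, (C2 m) ^ 2 * gr m := by
    rw [hxjval]; field_simp
  constructor
  · refine ⟨fun _ => hnonneg, fun n => le_refl _, ?_⟩
    have h1 : ∑ _n : Fin N, lamr * (xjval * gjam + (C2 _n) ^ 2 * gr _n)
        = (N:ℝ) * (lamr * xjval * gjam) + lamr * ∑ n, (C2 n) ^ 2 * gr n := by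
      rw [Finset.mul_sum]
      rw [show (∑ n : Fin N, lamr * (xjval * gjam + (C2 n) ^ 2 * gr n))
        = ∑ n : Fin N, (lamr * xjval * gjam + lamr * ((C2 n) ^ 2 * gr n)) from
        Finset.sum_congr rfl fun n _ => by ring]
      rw [Finset.sum_add_distrib, Finset.sum_const, Finset.card_univ, Fintype.card_fin,
        nsmul_eq_mul]
    rw [h1]; nlinarith [hx]
  · intro yj yr hyj hyr hcon
    have hcon' : lamr * gjam * ∑ n, yj n + lamr * ∑ n, yr n * gr n = C1 := by
      rw [← hcon, Finset.mul_sum, Finset.mul_sum, ← Finset.sum_add_distrib]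
      exact Finset.sum_congr rfl fun n _ => by ring
    have hkey : ∑ n, yr n * gr n + gjam * ∑ n, (C2 n) ^ 2
        ≤ gjam * ∑ n, yr n + ∑ n, (C2 n) ^ 2 * gr n := by
      rw [Finset.mul_sum, Finset.mul_sum, ← Finset.sum_add_distrib, ← Finset.sum_add_distrib]
      refine Finset.sum_le_sum fun n _ => ?_
      nlinarith [hyr n, (hgjam n).le]
    have hL : ∑ _n : Fin N, lamr * (xjval + (C2 _n) ^ 2)
        = (N:ℝ) * (lamr * xjval) + lamr * ∑ n, (C2 n) ^ 2 := by
      rw [Finset.mul_sum]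
      rw [show (∑ _n : Fin N, lamr * (xjval + (C2 _n) ^ 2))
        = ∑ n : Fin N, (lamr * xjval + lamr * (C2 n) ^ 2) from
        Finset.sum_congr rfl fun n _ => by ring]
      rw [Finset.sum_add_distrib, Finset.sum_const, Finset.card_univ, Fintype.card_fin,
        nsmul_eq_mul]
    have hR : ∑ n, lamr * (yj n + yr n)
        = lamr * ∑ n, yj n + lamr * ∑ n, yr n := by
      rw [Finset.mul_sum, Finset.mul_sum, ← Finset.sum_add_distrib]
      exact Finset.sum_congr rfl fun n _ => by ring
    rw [hL, hR]
    nlinarith [hx, hcon', mul_le_mul_of_nonneg_left hkey hlam.le, hgj, hlam]
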